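/- arXiv:2507.17715 — 14 statements merged into one kernel-verified Lean document; each statement's English description precedes it below -/
import Mathlib

section
/- Let A be an ortholattice and let E and E' be quantifiers on A such that E(E' a) = E'(E a) for all a ∈ A. Define relations R and R' on the set F(A) of proper filters of A by: x R y iff {E a : a ∈ x} ⊆ y, and x R' y iff {E' a : a ∈ x} ⊆ y. Then R and R' commute: for all x, z ∈ F(A), there exists y ∈ F(A) with x R y and y R' z if and only if there exists w ∈ F(A) with x R' w and w R z. -/
/-- An orthocomplementation on a bounded lattice. -/
def IsOrtho {A : Type*} [Lattice A] [BoundedOrder A] (perp : A → A) : Prop :=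
  (∀ a : A, a ⊓ perp a = ⊥) ∧ (∀ a : A, a ⊔ perp a = ⊤) ∧
  (∀ a b : A, a ≤ b → perp b ≤ perp a) ∧ (∀ a : A, perp (perp a) = a)

/-- A quantifier on an ortholattice. -/
def IsQuantifier {A : Type*} [Lattice A] [BoundedOrder A] (perp E : A → A) : Prop :=
  (∀ a b : A, E (a ⊔ b) = E a ⊔ E b) ∧ E ⊥ = ⊥ ∧ (∀ a : A, E (E a) = E a) ∧
  (∀ a : A, a ≤ E a) ∧ (∀ a : A, E (perp (E a)) = perp (E a))

/-- A proper filter: nonempty, upward closed, closed under meets, not containing ⊥. -/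
def IsPF {A : Type*} [Lattice A] [BoundedOrder A] (x : Set A) : Prop :=
  x.Nonempty ∧ (∀ a ∈ x, ∀ b : A, a ≤ b → b ∈ x) ∧
  (∀ a ∈ x, ∀ b ∈ x, a ⊓ b ∈ x) ∧ (⊥ : A) ∉ x

/-- The set of proper filters of `A`. -/
abbrev PF (A : Type*) [Lattice A] [BoundedOrder A] : Type _ := {x : Set A // IsPF x}

/-- `phi a` is the set of proper filters containing `a`. -/
def phi {A : Type*} [Lattice A] [BoundedOrder A] (a : A) : Set (PF A) := {x | a ∈ x.1}

/-- Orthogonal of a set of proper filters: `x ⊥ y` iff some `a ∈ x` has `perp a ∈ y`. -/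
def oPerp {A : Type*} [Lattice A] [BoundedOrder A] (perp : A → A) (U : Set (PF A)) :
    Set (PF A) := {x | ∀ y ∈ U, ∃ a ∈ x.1, perp a ∈ y.1}

lemma quant_mono {A : Type*} [Lattice A] [BoundedOrder A] {perp E : A → A}
    (hE : IsQuantifier perp E) {a b : A} (h : a ≤ b) : E a ≤ E b := by
  have : E b = E a ⊔ E b := by rw [← hE.1, sup_eq_right.mpr h]
  rw [this]; exact le_sup_left

lemma stmt0_aux {A : Type*} [Lattice A] [BoundedOrder A] {perp : A → A}
    {E E' : A → A}
    (hE : IsQuantifier perp E) (hE' : IsQuantifier perp E')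
    (hcomm : ∀ a : A, E (E' a) = E' (E a)) (x z : PF A)
    (h : ∃ y : PF A, E '' x.1 ⊆ y.1 ∧ E' '' y.1 ⊆ z.1) :
    ∃ w : PF A, E' '' x.1 ⊆ w.1 ∧ E '' w.1 ⊆ z.1 := by
  obtain ⟨y, hxy, hyz⟩ := h
  obtain ⟨x1, hx1⟩ := x.2.1
  refine ⟨⟨{c | ∃ a ∈ x.1, E' a ≤ c}, ?_, ?_, ?_, ?_⟩, ?_, ?_⟩
  · exact ⟨E' x1, x1, hx1, le_rfl⟩
  · rintro c ⟨a, ha, hac⟩ b hcb; exact ⟨a, ha, hac.trans hcb⟩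
  · rintro c ⟨a, ha, hac⟩ d ⟨b, hb, hbd⟩
    exact ⟨a ⊓ b, x.2.2.2.1 a ha b hb,
      le_inf ((quant_mono hE' inf_le_left).trans hac)
        ((quant_mono hE' inf_le_right).trans hbd)⟩
  · rintro ⟨a, ha, hab⟩
    have : a = ⊥ := le_bot_iff.mp ((hE'.2.2.2.1 a).trans hab)
    exact x.2.2.2.2 (this ▸ ha)
  · rintro _ ⟨a, ha, rfl⟩; exact ⟨a, ha, le_rfl⟩
  · rintro _ ⟨c, ⟨a, ha, hac⟩, rfl⟩
    have h1 : E (E' a) ∈ z.1 := by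
      rw [hcomm]; exact hyz ⟨E a, hxy ⟨a, ha, rfl⟩, rfl⟩
    exact z.2.2.1 _ h1 _ (quant_mono hE hac)

theorem stmt0 {A : Type*} [Lattice A] [BoundedOrder A] (perp : A → A)
    (hA : IsOrtho perp) (E E' : A → A)
    (hE : IsQuantifier perp E) (hE' : IsQuantifier perp E')
    (hcomm : ∀ a : A, E (E' a) = E' (E a)) (x z : PF A) :
    (∃ y : PF A, E '' x.1 ⊆ y.1 ∧ E' '' y.1 ⊆ z.1) ↔
      (∃ w : PF A, E' '' x.1 ⊆ w.1 ∧ E '' w.1 ⊆ z.1) := by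
  constructor
  · exact stmt0_aux hE hE' hcomm x z
  · exact stmt0_aux hE' hE (fun a => (hcomm a).symm) x z
end

section
/- Let A be an I-dimensional cylindric ortholattice and let i, k, l ∈ I with k ≠ i and k ≠ l. Define the relation R_k on F(A) by x R_k y iff {∃_k a : a ∈ x} ⊆ y, and for W ⊆ F(A) let R_k[W] = {y ∈ F(A) : x R_k y for some x ∈ W}. Then R_k[φ(δ_{i,k}) ∩ φ(δ_{k,l})] = φ(δ_{i,l}). -/
theorem stmt1 {A : Type*} [Lattice A] [BoundedOrder A] {I : Type*} (perp : A → A)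
    (hA : IsOrtho perp) (ex : I → A → A) (hq : ∀ i, IsQuantifier perp (ex i))
    (hcomm : ∀ i k (a : A), ex i (ex k a) = ex k (ex i a))
    (δ : I → I → A) (hδsym : ∀ i k, δ i k = δ k i) (hδrefl : ∀ i, δ i i = ⊤)
    (hδ : ∀ i k l, k ≠ i → k ≠ l → ex k (δ i k ⊓ δ k l) = δ i l)
    (i k l : I) (hki : k ≠ i) (hkl : k ≠ l) :
    {y : PF A | ∃ x ∈ phi (δ i k) ∩ phi (δ k l), ex k '' x.1 ⊆ y.1} = phi (δ i l) := by
  have hmono : ∀ a b : A, a ≤ b → ex k a ≤ ex k b := by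
    intro a b hab
    have h := (hq k).1 a b
    rw [sup_eq_right.2 hab] at h
    exact h ▸ le_sup_left
  ext y
  constructor
  · rintro ⟨x, ⟨hik, hkl'⟩, himg⟩
    have hd : δ i k ⊓ δ k l ∈ x.1 := x.2.2.2.1 _ hik _ hkl'
    have : ex k (δ i k ⊓ δ k l) ∈ y.1 := himg ⟨_, hd, rfl⟩
    rwa [hδ i k l hki hkl] at this
  · intro hy
    have hδil : δ i l ∈ y.1 := hy
    set d := δ i k ⊓ δ k l with hdd
    have hdne : ¬ d ≤ (⊥ : A) := by
      intro h
      have : d = ⊥ := le_bot_iff.1 h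
      have hb : ex k d = ⊥ := by rw [this]; exact (hq k).2.1
      rw [hδ i k l hki hkl] at hb
      exact y.2.2.2.2 (hb ▸ hδil)
    refine ⟨⟨{a | d ≤ a}, ?_, ?_, ?_, ?_⟩, ⟨inf_le_left, inf_le_right⟩, ?_⟩
    · exact ⟨d, le_refl d⟩
    · exact fun a ha b hab => le_trans ha hab
    · exact fun a ha b hb => le_inf ha hb
    · exact hdne
    · rintro _ ⟨a, ha, rfl⟩
      have : ex k d ≤ ex k a := hmono _ _ ha
      rw [hδ i k l hki hkl] at this
      exact y.2.2.1 _ hδil _ this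
end

section
/- Let A be an ortholattice and E a quantifier on A. Define the relation R on F(A) by x R y iff {E a : a ∈ x} ⊆ y, and define x ⊥ y iff there exists a ∈ x with aᗮ ∈ y. Then R is reflexive and transitive, and for every x ∈ F(A) the set R[{x}]^⊥ is closed under R: if y ∈ R[{x}]^⊥ and y R z, then z ∈ R[{x}]^⊥. -/
theorem stmt2 {A : Type*} [Lattice A] [BoundedOrder A] (perp : A → A)
    (hA : IsOrtho perp) (E : A → A) (hE : IsQuantifier perp E) :
    (∀ x : PF A, E '' x.1 ⊆ x.1) ∧
    (∀ x y z : PF A, E '' x.1 ⊆ y.1 → E '' y.1 ⊆ z.1 → E '' x.1 ⊆ z.1) ∧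
    (∀ x : PF A, ∀ y ∈ oPerp perp {y : PF A | E '' x.1 ⊆ y.1},
      ∀ z : PF A, E '' y.1 ⊆ z.1 → z ∈ oPerp perp {y : PF A | E '' x.1 ⊆ y.1}) := by
  obtain ⟨hjoin, hbot, hidem, hincr, hperp⟩ := hE
  obtain ⟨_, _, hanti, hinv⟩ := hA
  -- E is monotone
  have hmono : ∀ a b : A, a ≤ b → E a ≤ E b := by
    intro a b hab
    have : E (a ⊔ b) = E a ⊔ E b := hjoin a b
    rw [sup_eq_right.2 hab] at this
    exact le_sup_left.trans this.ge
  refine ⟨?_, ?_, ?_⟩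
  · rintro x _ ⟨a, ha, rfl⟩
    exact x.2.2.1 a ha (E a) (hincr a)
  · rintro x y z hxy hyz _ ⟨a, ha, rfl⟩
    have h1 : E a ∈ y.1 := hxy ⟨a, ha, rfl⟩
    have h2 : E (E a) ∈ z.1 := hyz ⟨E a, h1, rfl⟩
    rwa [hidem a] at h2
  · intro x y hy z hyz w hw
    -- build the filter w' generated by E '' w
    set w' : Set A := {b : A | ∃ c ∈ w.1, E c ≤ b} with hw'def
    have hw'pf : IsPF w' := by
      refine ⟨?_, ?_, ?_, ?_⟩
      · obtain ⟨c, hc⟩ := w.2.1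
        exact ⟨E c, c, hc, le_rfl⟩
      · rintro a ⟨c, hc, hle⟩ b hab
        exact ⟨c, hc, hle.trans hab⟩
      · rintro a ⟨c, hc, hca⟩ b ⟨d, hd, hdb⟩
        exact ⟨c ⊓ d, w.2.2.2.1 c hc d hd,
          le_inf ((hmono _ _ inf_le_left).trans hca) ((hmono _ _ inf_le_right).trans hdb)⟩
      · rintro ⟨c, hc, hle⟩
        have : c ≤ ⊥ := (hincr c).trans hle
        exact w.2.2.2.2 (w.2.2.1 c hc ⊥ this)
    have hw'R : E '' x.1 ⊆ w' := by
      rintro _ ⟨a, ha, rfl⟩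
      have : E a ∈ w.1 := hw ⟨a, ha, rfl⟩
      exact ⟨E a, this, (hidem a).le⟩
    obtain ⟨a, hay, c, hcw, hEc⟩ := hy ⟨w', hw'pf⟩ hw'R
    -- a ≤ perp (E c)
    have h1 : a ≤ perp (E c) := by
      have := hanti _ _ hEc
      rwa [hinv a] at this
    have h2 : perp (E c) ∈ y.1 := y.2.2.1 a hay _ h1
    have h3 : E (perp (E c)) ∈ z.1 := hyz ⟨_, h2, rfl⟩
    rw [hperp c] at h3
    refine ⟨perp (E c), h3, ?_⟩
    rw [hinv (E c)]
    exact w.2.2.1 c hcw (E c) (hincr c)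
end

section
/- Let A be an ortholattice and a ∈ A. Then φ(a) = φ(a)^⊥⊥, i.e., the set of proper filters containing a is biorthogonally closed with respect to the orthogonality relation on proper filters. -/
theorem stmt3 {A : Type*} [Lattice A] [BoundedOrder A] (perp : A → A)
    (hA : IsOrtho perp) (a : A) :
    phi a = oPerp perp (oPerp perp (phi a)) := by
  obtain ⟨hbot, htop, hanti, hinv⟩ := hA
  ext x
  constructor
  · intro hx y hy
    obtain ⟨b, hb, hpb⟩ := hy x hx
    exact ⟨perp b, hpb, by rwa [hinv]⟩
  · intro hx
    by_cases hat : a = ⊤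
    · obtain ⟨c, hc⟩ := x.2.1
      exact hat ▸ x.2.2.1 c hc ⊤ le_top
    · have hpa : perp a ≠ ⊥ := by
        intro h
        apply hat
        have := hinv a
        rw [h] at this
        have h2 : perp ⊥ = ⊤ := by
          have := htop ⊥
          simpa using this
        rw [h2] at this
        exact this.symm
      set yset : Set A := {b | perp a ≤ b} with hyset
      have hy : IsPF yset := by
        refine ⟨⟨perp a, le_refl _⟩, ?_, ?_, ?_⟩
        · intro c hc b hcb; exact le_trans hc hcb
        · intro c hc b hb; exact le_inf hc hb
        · intro h; exact hpa (le_bot_iff.mp h)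
      have hyU : (⟨yset, hy⟩ : PF A) ∈ oPerp perp (phi a) := by
        intro z hz
        exact ⟨perp a, le_refl _, by rwa [hinv]⟩
      obtain ⟨c, hc, hpc⟩ := hx _ hyU
      have : c ≤ a := by
        have h1 : perp a ≤ perp c := hpc
        have h2 := hanti _ _ h1
        rwa [hinv, hinv] at h2
      exact x.2.2.1 c hc a this
end

section
/- Let A be an I-dimensional cylindric ortholattice, and for each i ∈ I define the relation R_i on F(A) by x R_i y iff {∃_i c : c ∈ x} ⊆ y, with R_i[W] = {y ∈ F(A) : x R_i y for some x ∈ W}. Then the map φ satisfies: (i) a ≤ b if and only if φ(a) ⊆ φ(b) (in particular φ is injective); (ii) φ(a ⊓ b) = φ(a) ∩ φ(b); (iii) φ(aᗮ) = φ(a)^⊥; (iv) φ(a ⊔ b) = (φ(a) ∪ φ(b))^⊥⊥; (v) φ(∃_i a) = (R_i[φ(a)])^⊥⊥ for every i ∈ I and a ∈ A. -/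
theorem stmt4 {A : Type*} [Lattice A] [BoundedOrder A] {I : Type*} (perp : A → A)
    (hA : IsOrtho perp) (ex : I → A → A) (hq : ∀ i, IsQuantifier perp (ex i))
    (hcomm : ∀ i k (a : A), ex i (ex k a) = ex k (ex i a))
    (δ : I → I → A) (hδsym : ∀ i k, δ i k = δ k i) (hδrefl : ∀ i, δ i i = ⊤)
    (hδ : ∀ i k l, k ≠ i → k ≠ l → ex k (δ i k ⊓ δ k l) = δ i l) :
    (∀ a b : A, a ≤ b ↔ phi a ⊆ phi b) ∧
    Function.Injective (phi : A → Set (PF A)) ∧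
    (∀ a b : A, phi (a ⊓ b) = phi a ∩ phi b) ∧
    (∀ a : A, phi (perp a) = oPerp perp (phi a)) ∧
    (∀ a b : A, phi (a ⊔ b) = oPerp perp (oPerp perp (phi a ∪ phi b))) ∧
    (∀ (i : I) (a : A), phi (ex i a) =
      oPerp perp (oPerp perp {y : PF A | ∃ x ∈ phi a, ex i '' x.1 ⊆ y.1})) := by
  obtain ⟨hbot, htop, hanti, hinv⟩ := hA
  have hle : ∀ a b : A, a ≤ perp b ↔ b ≤ perp a := by
    intro a b
    constructor
    · intro h
      calc b = perp (perp b) := (hinv b).symm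
        _ ≤ perp a := hanti _ _ h
    · intro h
      calc a = perp (perp a) := (hinv a).symm
        _ ≤ perp b := hanti _ _ h
  have hperpbot : perp (⊥ : A) = ⊤ := by
    apply le_antisymm le_top
    have := hanti ⊥ (perp ⊤) bot_le
    rwa [hinv] at this
  have hpf : ∀ a : A, a ≠ ⊥ → IsPF {c : A | a ≤ c} := by
    intro a ha
    refine ⟨⟨a, le_refl a⟩, ?_, ?_, ?_⟩
    · intro c hc b hb; exact le_trans hc hb
    · intro c hc b hb; exact le_inf hc hb
    · intro h; exact ha (le_antisymm h bot_le)
  have htopmem : ∀ x : PF A, (⊤ : A) ∈ x.1 := by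
    intro x
    obtain ⟨⟨c, hc⟩, hup, _, _⟩ := x.2
    exact hup c hc ⊤ le_top
  have hkey : ∀ a : A, ∀ x : PF A, x ∈ oPerp perp (phi a) → perp a ∈ x.1 := by
    intro a x hx
    by_cases ha : a = ⊥
    · subst ha; rw [hperpbot]; exact htopmem x
    · obtain ⟨c, hcx, hc⟩ := hx ⟨{c | a ≤ c}, hpf a ha⟩ (le_refl a)
      have : c ≤ perp a := (hle a c).mp hc
      exact x.2.2.1 c hcx (perp a) this
  have hphiperp : ∀ a : A, phi (perp a) = oPerp perp (phi a) := by
    intro a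
    ext x
    constructor
    · intro hx y hy
      exact ⟨perp a, hx, by rw [hinv]; exact hy⟩
    · exact hkey a x
  have hmono : ∀ U V : Set (PF A), U ⊆ V → oPerp perp V ⊆ oPerp perp U := by
    intro U V h x hx y hy; exact hx y (h hy)
  have hclosed : ∀ a : A, oPerp perp (oPerp perp (phi a)) = phi a := by
    intro a
    rw [← hphiperp a, ← hphiperp (perp a), hinv a]
  have hord : ∀ a b : A, a ≤ b ↔ phi a ⊆ phi b := by
    intro a b
    constructor
    · intro h x hx
      exact x.2.2.1 a hx b h
    · intro h
      by_cases ha : a = ⊥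
      · subst ha; exact bot_le
      · exact h (show (⟨{c | a ≤ c}, hpf a ha⟩ : PF A) ∈ phi a from le_refl a)
  refine ⟨hord, ?_, ?_, hphiperp, ?_, ?_⟩
  · intro a b h
    exact le_antisymm ((hord a b).mpr (le_of_eq h)) ((hord b a).mpr (ge_of_eq h))
  · intro a b
    ext x
    constructor
    · intro hx
      exact ⟨x.2.2.1 _ hx a inf_le_left, x.2.2.1 _ hx b inf_le_right⟩
    · intro ⟨hx1, hx2⟩
      exact x.2.2.2.1 a hx1 b hx2
  · intro a b
    have hdm : perp a ⊓ perp b ≤ perp (a ⊔ b) := by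
      rw [← hle]
      exact sup_le ((hle _ _).mpr inf_le_left) ((hle _ _).mpr inf_le_right)
    apply le_antisymm
    · intro x hx y hy
      have hya : perp a ∈ y.1 := hkey a y (hmono _ _ (Set.subset_union_left) hy)
      have hyb : perp b ∈ y.1 := hkey b y (hmono _ _ (Set.subset_union_right) hy)
      refine ⟨a ⊔ b, hx, ?_⟩
      exact y.2.2.1 _ (y.2.2.2.1 _ hya _ hyb) _ hdm
    · have h1 : phi a ∪ phi b ⊆ phi (a ⊔ b) := by
        rintro x (hx | hx)
        · exact x.2.2.1 a hx _ le_sup_left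
        · exact x.2.2.1 b hx _ le_sup_right
      have := hmono _ _ (hmono _ _ h1)
      rw [hclosed] at this
      exact this
  · intro i a
    obtain ⟨hq1, hq2, hq3, hq4, hq5⟩ := hq i
    have hexmono : ∀ c d : A, c ≤ d → ex i c ≤ ex i d := by
      intro c d h
      have : ex i (c ⊔ d) = ex i c ⊔ ex i d := hq1 c d
      rw [sup_eq_right.mpr h] at this
      rw [this]
      exact le_sup_left
    have hR : {y : PF A | ∃ x ∈ phi a, ex i '' x.1 ⊆ y.1} ⊆ phi (ex i a) := by
      rintro y ⟨x, hxa, hxy⟩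
      exact hxy ⟨a, hxa, rfl⟩
    apply le_antisymm
    · intro x hx y hy
      have ha : a ≠ ⊥ := by
        intro h
        subst h
        rw [hq2] at hx
        exact x.2.2.2.2 hx
      have hea : ex i a ≠ ⊥ := by
        intro h
        rw [h] at hx
        exact x.2.2.2.2 hx
      have hz : (⟨{c | ex i a ≤ c}, hpf _ hea⟩ : PF A) ∈
          {y : PF A | ∃ x ∈ phi a, ex i '' x.1 ⊆ y.1} := by
        refine ⟨⟨{c | a ≤ c}, hpf a ha⟩, le_refl a, ?_⟩
        rintro c ⟨d, hd, rfl⟩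
        exact hexmono a d hd
      obtain ⟨c, hcy, hc⟩ := hy _ hz
      refine ⟨ex i a, hx, ?_⟩
      exact y.2.2.1 c hcy _ ((hle _ _).mp hc)
    · have := hmono _ _ (hmono _ _ hR)
      rw [hclosed] at this
      exact this
end

section
/- Let A be an ortholattice and let S, T ⊆ A. If every proper filter of A containing all elements of S belongs to (⋃_{b∈T} φ(b))^⊥⊥ (that is, ⋂_{a∈S} φ(a) ⊆ (⋃_{b∈T} φ(b))^⊥⊥, where the intersection over the empty index set is all of F(A)), then there exist finite subsets S' ⊆ S and T' ⊆ T such that ⋂_{a∈S'} φ(a) ⊆ (⋃_{b∈T'} φ(b))^⊥⊥. (This is the compactness of the embedding φ of A into the lattice of biorthogonally closed subsets of F(A), in which meets are intersections and the join of a family is the biorthogonal closure of its union.) -/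
namespace Stmt5Aux

variable {A : Type*} [Lattice A] [BoundedOrder A]

lemma perp_bot {perp : A → A} (hA : IsOrtho perp) : perp ⊥ = ⊤ := by
  have := hA.2.1 ⊥
  simpa using this

lemma top_mem {x : Set A} (hx : IsPF x) : (⊤ : A) ∈ x := by
  obtain ⟨a, ha⟩ := hx.1
  exact hx.2.1 a ha ⊤ le_top

lemma inf_mem {x : Set A} (hx : IsPF x) {f : A → A} {F : Finset A}
    (hF : ∀ a ∈ F, f a ∈ x) : F.inf f ∈ x := by
  classical
  induction F using Finset.induction_on with
  | empty =>
    simpa using top_mem hx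
  | @insert a s _ ih =>
    rw [Finset.inf_insert]
    exact hx.2.2.1 _ (hF a (by simp)) _ (ih fun b hb => hF b (by simp [hb]))

lemma principal_pf {b : A} (hb : b ≠ ⊥) : IsPF {c : A | b ≤ c} := by
  refine ⟨⟨b, le_refl b⟩, fun a ha c hc => le_trans ha hc,
    fun a ha c hc => le_inf ha hc, fun hbot => hb (le_antisymm hbot bot_le)⟩

lemma perp_mem {perp : A → A} (hA : IsOrtho perp) (T' : Finset A)
    {y : PF A} (hy : y ∈ oPerp perp (⋃ b ∈ T', phi b))
    {b : A} (hb : b ∈ T') : perp b ∈ y.1 := by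
  by_cases hb0 : b = ⊥
  · subst hb0; rw [perp_bot hA]; exact top_mem y.2
  · obtain ⟨a, ha, hpa⟩ := hy ⟨_, principal_pf hb0⟩
      (Set.mem_iUnion₂.2 ⟨b, hb, le_refl b⟩)
    have hle : a ≤ perp b := by
      have := hA.2.2.1 b (perp a) hpa
      rwa [hA.2.2.2 a] at this
    exact y.2.2.1 a ha _ hle

lemma key {perp : A → A} (hA : IsOrtho perp) (S' T' : Finset A)
    (hle : T'.inf perp ≤ perp (S'.inf id)) :
    (⋂ a ∈ S', phi a) ⊆ oPerp perp (oPerp perp (⋃ b ∈ T', phi b)) := by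
  intro x hx y hy
  refine ⟨S'.inf id, ?_, ?_⟩
  · exact inf_mem x.2 fun a ha => Set.mem_iInter₂.1 hx a ha
  · have h1 : T'.inf perp ∈ y.1 := inf_mem y.2 fun b hb => perp_mem hA T' hy hb
    exact y.2.2.1 _ h1 _ hle

end Stmt5Aux

open Stmt5Aux in
theorem stmt5 {A : Type*} [Lattice A] [BoundedOrder A] (perp : A → A)
    (hA : IsOrtho perp) (S T : Set A)
    (h : (⋂ a ∈ S, phi a) ⊆ oPerp perp (oPerp perp (⋃ b ∈ T, phi b))) :
    ∃ S' T' : Finset A, (S' : Set A) ⊆ S ∧ (T' : Set A) ⊆ T ∧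
      (⋂ a ∈ S', phi a) ⊆ oPerp perp (oPerp perp (⋃ b ∈ T', phi b)) := by
  classical
  by_cases hS : ∃ F : Finset A, ↑F ⊆ S ∧ F.inf id = ⊥
  · obtain ⟨F, hFS, hF⟩ := hS
    refine ⟨F, ∅, hFS, by simp, key hA F ∅ ?_⟩
    simp [hF, perp_bot hA]
  by_cases hT : ∃ G : Finset A, ↑G ⊆ T ∧ G.inf perp = ⊥
  · obtain ⟨G, hGT, hG⟩ := hT
    refine ⟨∅, G, by simp, hGT, key hA ∅ G ?_⟩
    simp [hG]
  -- the filter generated by S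
  set xS : Set A := {c | ∃ F : Finset A, ↑F ⊆ S ∧ F.inf id ≤ c} with hxS
  have hxSpf : IsPF xS := by
    refine ⟨⟨⊤, ∅, by simp⟩, ?_, ?_, ?_⟩
    · rintro a ⟨F, hFS, hFa⟩ b hab
      exact ⟨F, hFS, le_trans hFa hab⟩
    · rintro a ⟨F, hFS, hFa⟩ b ⟨G, hGS, hGb⟩
      refine ⟨F ∪ G, ?_, ?_⟩
      · simp only [Finset.coe_union, Set.union_subset_iff]; exact ⟨hFS, hGS⟩
      · rw [Finset.inf_union]; exact inf_le_inf hFa hGb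
    · rintro ⟨F, hFS, hFbot⟩
      exact hS ⟨F, hFS, le_antisymm hFbot bot_le⟩
  -- the filter generated by perps of T
  set y0 : Set A := {c | ∃ G : Finset A, ↑G ⊆ T ∧ G.inf perp ≤ c} with hy0
  have hy0pf : IsPF y0 := by
    refine ⟨⟨⊤, ∅, by simp⟩, ?_, ?_, ?_⟩
    · rintro a ⟨G, hGT, hGa⟩ b hab
      exact ⟨G, hGT, le_trans hGa hab⟩
    · rintro a ⟨F, hFT, hFa⟩ b ⟨G, hGT, hGb⟩
      refine ⟨F ∪ G, ?_, ?_⟩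
      · simp only [Finset.coe_union, Set.union_subset_iff]; exact ⟨hFT, hGT⟩
      · rw [Finset.inf_union]; exact inf_le_inf hFa hGb
    · rintro ⟨G, hGT, hGbot⟩
      exact hT ⟨G, hGT, le_antisymm hGbot bot_le⟩
  have hxmem : (⟨xS, hxSpf⟩ : PF A) ∈ ⋂ a ∈ S, phi a := by
    refine Set.mem_iInter₂.2 fun a ha => ?_
    exact ⟨{a}, by simpa using ha, by simp⟩
  have hy0mem : (⟨y0, hy0pf⟩ : PF A) ∈ oPerp perp (⋃ b ∈ T, phi b) := by
    intro z hz
    obtain ⟨b, hb, hbz⟩ := Set.mem_iUnion₂.1 hz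
    refine ⟨perp b, ⟨{b}, by simpa using hb, by simp⟩, ?_⟩
    rw [hA.2.2.2 b]; exact hbz
  obtain ⟨a, ⟨F, hFS, hFa⟩, ⟨G, hGT, hGa⟩⟩ := h hxmem _ hy0mem
  exact ⟨F, G, hFS, hGT, key hA F G (le_trans hGa (hA.2.2.1 _ _ hFa))⟩
end

section
/- Let A be an ortholattice. For each x ∈ F(A) let K_x = {y ∈ F(A) : x ⊆ y}. Then every biorthogonally closed subset U ⊆ F(A) satisfies: (i) U = (⋃_{x∈U} K_x)^⊥⊥, and (ii) U = ⋂ { (⋃_{b∈T} φ(b))^⊥⊥ : T ⊆ A and U ⊆ (⋃_{b∈T} φ(b))^⊥⊥ }. (This is the density of the embedding φ of A into the lattice of biorthogonally closed subsets of F(A): every element is both a join of meets and a meet of joins of elements in the image of φ.) -/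
section Aux
variable {A : Type*} [Lattice A] [BoundedOrder A] (perp : A → A)

lemma oPerp_antitone {U V : Set (PF A)} (h : U ⊆ V) :
    oPerp perp V ⊆ oPerp perp U := fun x hx y hy => hx y (h hy)

lemma subset_biperp (hpp : ∀ a : A, perp (perp a) = a) (U : Set (PF A)) :
    U ⊆ oPerp perp (oPerp perp U) := by
  intro x hx z hz
  obtain ⟨a, ha, hpa⟩ := hz x hx
  exact ⟨perp a, hpa, by rwa [hpp a]⟩

lemma oPerp_triple (hpp : ∀ a : A, perp (perp a) = a) (U : Set (PF A)) :
    oPerp perp (oPerp perp (oPerp perp U)) = oPerp perp U :=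
  le_antisymm (oPerp_antitone perp (subset_biperp perp hpp U))
    (subset_biperp perp hpp (oPerp perp U))

end Aux

theorem stmt6 {A : Type*} [Lattice A] [BoundedOrder A] (perp : A → A)
    (hA : IsOrtho perp) (U : Set (PF A)) (hU : U = oPerp perp (oPerp perp U)) :
    U = oPerp perp (oPerp perp (⋃ x ∈ U, {y : PF A | x.1 ⊆ y.1})) ∧
    U = ⋂₀ {V : Set (PF A) | ∃ T : Set A,
          V = oPerp perp (oPerp perp (⋃ b ∈ T, phi b)) ∧ U ⊆ V} := by
  obtain ⟨-, -, -, hpp⟩ := hA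
  constructor
  · -- part (i)
    set W : Set (PF A) := ⋃ x ∈ U, {y : PF A | x.1 ⊆ y.1} with hW
    have hUW : U ⊆ W := fun x hx => Set.mem_biUnion hx (le_refl x.1)
    have hWbi : W ⊆ oPerp perp (oPerp perp U) := by
      intro y hy
      obtain ⟨x, hxU, hxy⟩ := Set.mem_iUnion₂.mp hy
      intro z hz
      obtain ⟨a, haz, hpa⟩ := hz x hxU
      exact ⟨perp a, hxy hpa, by rwa [hpp a]⟩
    have h1 : oPerp perp W ⊆ oPerp perp U := oPerp_antitone perp hUW
    have h2 : oPerp perp U ⊆ oPerp perp W := by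
      have := oPerp_antitone perp hWbi
      rwa [oPerp_triple perp hpp] at this
    have : oPerp perp W = oPerp perp U := le_antisymm h1 h2
    rw [this, ← hU]
  · -- part (ii)
    apply le_antisymm
    · intro x hx V hV
      obtain ⟨T, -, hUV⟩ := hV
      exact hUV hx
    · intro x hx
      rw [hU]
      intro z hz
      -- the element of the family associated to z
      set T : Set A := perp '' z.1 with hT
      set S : Set (PF A) := ⋃ b ∈ T, phi b with hS
      have hUS : U ⊆ S := by
        intro w hw
        obtain ⟨a, haz, hpa⟩ := hz w hw
        exact Set.mem_biUnion ⟨a, haz, rfl⟩ hpa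
      have hzS : z ∈ oPerp perp S := by
        intro y hy
        obtain ⟨b, hbT, hby⟩ := Set.mem_iUnion₂.mp hy
        obtain ⟨a, haz, rfl⟩ := hbT
        exact ⟨a, haz, hby⟩
      have hmem : oPerp perp (oPerp perp S) ∈
          {V : Set (PF A) | ∃ T : Set A,
            V = oPerp perp (oPerp perp (⋃ b ∈ T, phi b)) ∧ U ⊆ V} := by
        refine ⟨T, rfl, ?_⟩
        exact fun w hw => subset_biperp perp hpp S (hUS hw)
      exact hx _ hmem z hzS
end

section
/- Every monadic UVO-space X is a spectral space: X is compact, every open subset of X is a union of compact open subsets, the intersection of any two compact open subsets of X is compact, and every nonempty irreducible closed subset of X is the closure of a (unique) point. -/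
/-- The orthogonal of a subset with respect to an orthogonality relation. -/
def tPerp {X : Type*} (orth : X → X → Prop) (U : Set X) : Set X := {x | ∀ y ∈ U, orth x y}

/-- Compact open biorthogonally closed subsets of a topological space with orthogonality. -/
def COB {X : Type*} [TopologicalSpace X] (orth : X → X → Prop) : Set (Set X) :=
  {U | IsCompact U ∧ IsOpen U ∧ U = tPerp orth (tPerp orth U)}

/-- Relational image of a set. -/
def Rimg {X : Type*} (R : X → X → Prop) (U : Set X) : Set X := {y | ∃ x ∈ U, R x y}

lemma empty_mem_COB {X : Type*} [TopologicalSpace X] (orth : X → X → Prop)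
    (hirr : ∀ x, ¬ orth x x) : (∅ : Set X) ∈ COB orth := by
  refine ⟨isCompact_empty, isOpen_empty, ?_⟩
  ext x
  simp only [Set.mem_empty_iff_false, false_iff, tPerp, Set.mem_setOf_eq]
  intro h
  exact hirr x (h x (by intro y hy; exact hy.elim))

lemma cob_finite_cover {X : Type*} [TopologicalSpace X] (orth : X → X → Prop)
    (hbasis : TopologicalSpace.IsTopologicalBasis (COB orth))
    {U : Set X} (hUc : IsCompact U) (hUo : IsOpen U) :
    ∃ t : Set (Set X), t.Finite ∧ t ⊆ COB orth ∧ U = ⋃₀ t := by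
  obtain ⟨S, hS, hUeq⟩ := hbasis.open_eq_sUnion hUo
  have hcover : U ⊆ ⋃ V ∈ S, V := by rw [hUeq, Set.sUnion_eq_biUnion]
  obtain ⟨t, htS, htfin, hsub⟩ :=
    hUc.elim_finite_subcover_image (fun V hV => (hS hV).2.1) hcover
  refine ⟨t, htfin, fun V hV => hS (htS hV), ?_⟩
  apply Set.Subset.antisymm
  · rwa [Set.sUnion_eq_biUnion]
  · intro x hx
    obtain ⟨V, hVt, hxV⟩ := hx
    rw [hUeq]
    exact ⟨V, htS hVt, hxV⟩

theorem stmt9 {X : Type*} [TopologicalSpace X] [T0Space X]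
    (orth : X → X → Prop) (R : X → X → Prop)
    (hirr : ∀ x, ¬ orth x x) (hsym : ∀ x y, orth x y → orth y x)
    (hrefl : ∀ x, R x x) (htrans : ∀ x y z, R x y → R y z → R x z)
    (h1 : ∀ x : X, Rimg R (tPerp orth (Rimg R {x})) ⊆ tPerp orth (Rimg R {x}))
    (hbasis : TopologicalSpace.IsTopologicalBasis (COB orth))
    (hinter : ∀ U ∈ COB orth, ∀ V ∈ COB orth, U ∩ V ∈ COB orth)
    (hperp : ∀ U ∈ COB orth, tPerp orth U ∈ COB orth)
    (hfilt : ∀ F : Set (Set X), F ⊆ COB orth → F.Nonempty →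
      (∀ U ∈ F, ∀ V ∈ F, U ∩ V ∈ F) →
      (∀ U ∈ F, ∀ V ∈ COB orth, U ⊆ V → V ∈ F) → ∅ ∉ F →
      ∃ x : X, F = {U ∈ COB orth | x ∈ U})
    (hsep : ∀ x y, orth x y → ∃ U ∈ COB orth, x ∈ U ∧ y ∈ tPerp orth U)
    (hRimg : ∀ U ∈ COB orth, Rimg R U ∈ COB orth)
    (h6 : ∀ x y, ¬ R x y →
      ∃ V ∈ COB orth, x ∈ V ∧ y ∉ tPerp orth (tPerp orth (Rimg R V))) :
    CompactSpace X ∧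
    (∀ U : Set X, IsOpen U →
      ∃ S : Set (Set X), (∀ V ∈ S, IsCompact V ∧ IsOpen V) ∧ U = ⋃₀ S) ∧
    (∀ U V : Set X, IsCompact U → IsOpen U → IsCompact V → IsOpen V → IsCompact (U ∩ V)) ∧
    (∀ C : Set X, IsIrreducible C → IsClosed C → ∃! x : X, C = closure {x}) := by
  have hempty := empty_mem_COB orth hirr
  have huniv : (Set.univ : Set X) ∈ COB orth := by
    have := hperp ∅ hempty
    have heq : tPerp orth (∅ : Set X) = Set.univ := by
      ext x; simp [tPerp]
    rwa [heq] at this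
  refine ⟨⟨huniv.1⟩, ?_, ?_, ?_⟩
  · intro U hU
    obtain ⟨S, hS, hUeq⟩ := hbasis.open_eq_sUnion hU
    exact ⟨S, fun V hV => ⟨(hS hV).1, (hS hV).2.1⟩, hUeq⟩
  · intro U V hUc hUo hVc hVo
    obtain ⟨t, htfin, htC, htU⟩ := cob_finite_cover orth hbasis hUc hUo
    obtain ⟨s, hsfin, hsC, hsV⟩ := cob_finite_cover orth hbasis hVc hVo
    have : U ∩ V = ⋃ A ∈ t, ⋃ B ∈ s, A ∩ B := by
      rw [htU, hsV]
      ext x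
      simp only [Set.mem_inter_iff, Set.mem_sUnion, Set.mem_iUnion]
      constructor
      · rintro ⟨⟨A, hA, hxA⟩, ⟨B, hB, hxB⟩⟩
        exact ⟨A, hA, B, hB, hxA, hxB⟩
      · rintro ⟨A, hA, B, hB, hxA, hxB⟩
        exact ⟨⟨A, hA, hxA⟩, ⟨B, hB, hxB⟩⟩
    rw [this]
    apply htfin.isCompact_biUnion
    intro A hA
    apply hsfin.isCompact_biUnion
    intro B hB
    exact (hinter A (htC hA) B (hsC hB)).1
  · intro C hCirr hCcl
    have hCne := hCirr.1
    set F : Set (Set X) := {U ∈ COB orth | (U ∩ C).Nonempty} with hF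
    have hFsub : F ⊆ COB orth := fun U hU => hU.1
    have hFne : F.Nonempty := by
      obtain ⟨x, hx⟩ := hCne
      exact ⟨Set.univ, huniv, ⟨x, Set.mem_univ x, hx⟩⟩
    have hFint : ∀ U ∈ F, ∀ V ∈ F, U ∩ V ∈ F := by
      rintro U ⟨hUC, hUne⟩ V ⟨hVC, hVne⟩
      refine ⟨hinter U hUC V hVC, ?_⟩
      have := hCirr.2 U V hUC.2.1 hVC.2.1
        (by obtain ⟨x, hx1, hx2⟩ := hUne; exact ⟨x, hx2, hx1⟩)
        (by obtain ⟨x, hx1, hx2⟩ := hVne; exact ⟨x, hx2, hx1⟩)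
      obtain ⟨x, hxC, hxU, hxV⟩ := this
      exact ⟨x, ⟨hxU, hxV⟩, hxC⟩
    have hFup : ∀ U ∈ F, ∀ V ∈ COB orth, U ⊆ V → V ∈ F := by
      rintro U ⟨hUC, x, hxU, hxC⟩ V hVC hUV
      exact ⟨hVC, x, hUV hxU, hxC⟩
    have hFprop : ∅ ∉ F := by
      rintro ⟨-, x, hx, -⟩
      exact hx
    obtain ⟨x, hxF⟩ := hfilt F hFsub hFne hFint hFup hFprop
    have hxC : x ∈ C := by
      by_contra hxC
      obtain ⟨U, hUC, hxU, hUsub⟩ := hbasis.exists_subset_of_mem_open hxC hCcl.isOpen_compl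
      have : U ∈ F := hxF ▸ ⟨hUC, hxU⟩
      obtain ⟨y, hyU, hyC⟩ := this.2
      exact hUsub hyU hyC
    refine ⟨x, ?_, ?_⟩
    · apply Set.Subset.antisymm
      · intro y hyC
        by_contra hy
        obtain ⟨U, hUC, hyU, hUsub⟩ := hbasis.exists_subset_of_mem_open hy
          (isClosed_closure (s := {x})).isOpen_compl
        have hUF : U ∈ F := ⟨hUC, ⟨y, hyU, hyC⟩⟩
        rw [hxF] at hUF
        exact hUsub hUF.2 (subset_closure rfl)
      · rw [← hCcl.closure_eq]
        exact closure_mono (Set.singleton_subset_iff.mpr hxC)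
    · intro y hy
      have h1 : C = closure {x} := by
        apply Set.Subset.antisymm
        · intro z hzC
          by_contra hz
          obtain ⟨U, hUC, hzU, hUsub⟩ := hbasis.exists_subset_of_mem_open hz
            (isClosed_closure (s := {x})).isOpen_compl
          have hUF : U ∈ F := ⟨hUC, ⟨z, hzU, hzC⟩⟩
          rw [hxF] at hUF
          exact hUsub hUF.2 (subset_closure rfl)
        · rw [← hCcl.closure_eq]
          exact closure_mono (Set.singleton_subset_iff.mpr hxC)
      have : closure ({y} : Set X) = closure ({x} : Set X) := by rw [← hy, ← h1]
      exact ((inseparable_iff_closure_eq).mpr this).eq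
end

section
/- Let A be an ortholattice and E a quantifier on A. Then for every a ∈ A, R_E[φ(a)] = φ(E a), where R_E[φ(a)] = {y ∈ F(A) : there exists x ∈ F(A) with a ∈ x and {E c : c ∈ x} ⊆ y}. -/
theorem stmt10 {A : Type*} [Lattice A] [BoundedOrder A] (perp : A → A)
    (hA : IsOrtho perp) (E : A → A) (hE : IsQuantifier perp E) (a : A) :
    {y : PF A | ∃ x : PF A, a ∈ x.1 ∧ E '' x.1 ⊆ y.1} = phi (E a) := by
  obtain ⟨hjoin, hbot, hidem, hincr, hperp⟩ := hE
  have hmono : ∀ b c : A, b ≤ c → E b ≤ E c := by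
    intro b c hbc
    have : E (b ⊔ c) = E b ⊔ E c := hjoin b c
    rw [sup_eq_right.mpr hbc] at this
    exact le_sup_left.trans this.ge
  ext y
  constructor
  · rintro ⟨x, hax, hsub⟩
    exact y.2.2.1 _ (hsub ⟨a, hax, rfl⟩) _ le_rfl
  · intro hy
    by_cases ha : a = ⊥
    · exfalso
      apply y.2.2.2.2
      rw [← hbot, ← ha]
      exact hy
    · refine ⟨⟨{b | a ≤ b}, ⟨a, le_rfl⟩, fun p hp q hpq => hp.trans hpq,
        fun p hp q hq => le_inf hp hq, fun h => ha (le_bot_iff.mp h)⟩, le_rfl, ?_⟩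
      rintro _ ⟨b, hb, rfl⟩
      exact y.2.2.1 _ hy _ (hmono a b hb)
end

section
/- Let X and X' be UVO-spaces and let f : X → X' be a map such that: (1) f is continuous and f⁻¹[U] is compact open in X for every compact open U ⊆ X'; (2) if ¬(x ⊥ y) then ¬(f(x) ⊥ f(y)); (3) if ¬(z ⊥ f(y)) then there exists x ∈ X with ¬(x ⊥ y) and z ⩽ f(x), where ⩽ is the specialization order of X' (z ⩽ w iff every open set containing z contains w). Then f⁻¹[U] ∈ COB(X) for every U ∈ COB(X'). -/
/-- A UVO-space structure on a T0 space (T0 assumed separately as an instance):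
orthogonality is irreflexive and symmetric, `COB` is a basis closed under intersections
and orthocomplements, every proper filter of `COB` is realized by a point, and
orthogonal points are separated by a `COB` set. -/
def IsUVO {X : Type*} [TopologicalSpace X] (orth : X → X → Prop) : Prop :=
  (∀ x, ¬ orth x x) ∧ (∀ x y, orth x y → orth y x) ∧
  TopologicalSpace.IsTopologicalBasis (COB orth) ∧
  (∀ U ∈ COB orth, ∀ V ∈ COB orth, U ∩ V ∈ COB orth) ∧
  (∀ U ∈ COB orth, tPerp orth U ∈ COB orth) ∧
  (∀ F : Set (Set X), F ⊆ COB orth → F.Nonempty →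
    (∀ U ∈ F, ∀ V ∈ F, U ∩ V ∈ F) →
    (∀ U ∈ F, ∀ V ∈ COB orth, U ⊆ V → V ∈ F) → ∅ ∉ F →
    ∃ x : X, F = {U ∈ COB orth | x ∈ U}) ∧
  (∀ x y, orth x y → ∃ U ∈ COB orth, x ∈ U ∧ y ∈ tPerp orth U)

theorem stmt13 {X X' : Type*} [TopologicalSpace X] [TopologicalSpace X']
    [T0Space X] [T0Space X']
    (orth : X → X → Prop) (orth' : X' → X' → Prop)
    (hX : IsUVO orth) (hX' : IsUVO orth') (f : X → X')
    (hcont : Continuous f)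
    (hspec : ∀ U : Set X', IsCompact U → IsOpen U → IsCompact (f ⁻¹' U) ∧ IsOpen (f ⁻¹' U))
    (h2 : ∀ x y : X, ¬ orth x y → ¬ orth' (f x) (f y))
    (h3 : ∀ (y : X) (z : X'), ¬ orth' z (f y) →
      ∃ x : X, ¬ orth x y ∧ ∀ U : Set X', IsOpen U → z ∈ U → f x ∈ U) :
    ∀ U ∈ COB orth', f ⁻¹' U ∈ COB orth := by
  intro U hU
  obtain ⟨hUc, hUo, hUbi⟩ := hU
  obtain ⟨hKc, hKo⟩ := hspec U hUc hUo
  refine ⟨hKc, hKo, Set.Subset.antisymm ?_ ?_⟩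
  · intro x hx y hy
    exact hX.2.1 y x (hy x hx)
  · -- suppose x ∈ perp perp (f⁻¹ U); show f x ∈ U
    intro x hx
    show f x ∈ U
    rw [hUbi]
    intro z hz
    by_contra hne
    have hne' : ¬ orth' z (f x) := fun h => hne (hX'.2.1 z (f x) h)
    obtain ⟨w, hwx, hzw⟩ := h3 x z hne'
    -- w ∉ tPerp orth (f⁻¹ U)
    have hw : w ∉ tPerp orth (f ⁻¹' U) := by
      intro hmem
      exact hwx (hX.2.1 x w (hx w hmem))
    simp only [tPerp, Set.mem_setOf_eq, not_forall] at hw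
    obtain ⟨u, hu, hwu⟩ := hw
    -- tPerp orth' U is open, contains z, hence f w
    have hperp : tPerp orth' U ∈ COB orth' := hX'.2.2.2.2.1 U ⟨hUc, hUo, hUbi⟩
    have hfw : f w ∈ tPerp orth' U := hzw _ hperp.2.1 hz
    exact h2 w u hwu (hfw (f u) hu)
end

section
/- Let A be an I-dimensional cylindric Boolean algebra and let i, k, l ∈ I with k ≠ i and k ≠ l. Define the relation S_k on F(A) by x S_k y iff {∃_k a : a ∈ x} = {∃_k a : a ∈ y}, and for W ⊆ F(A) let S_k[W] = {y ∈ F(A) : x S_k y for some x ∈ W}. Then S_k[φ(δ_{i,k}) ∩ φ(δ_{k,l})] = φ(δ_{i,l}). -/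
/-- A quantifier on a Boolean algebra. -/
def IsQuantifierB {A : Type*} [BooleanAlgebra A] (E : A → A) : Prop :=
  (∀ a b : A, E (a ⊔ b) = E a ⊔ E b) ∧ E ⊥ = ⊥ ∧ (∀ a : A, E (E a) = E a) ∧
  (∀ a : A, a ≤ E a) ∧ (∀ a : A, E (E a)ᶜ = (E a)ᶜ)

theorem stmt15 {A : Type*} [BooleanAlgebra A] {I : Type*}
    (ex : I → A → A) (hq : ∀ i, IsQuantifierB (ex i))
    (hcomm : ∀ i k (a : A), ex i (ex k a) = ex k (ex i a))
    (δ : I → I → A) (hδsym : ∀ i k, δ i k = δ k i) (hδrefl : ∀ i, δ i i = ⊤)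
    (hδ : ∀ i k l, k ≠ i → k ≠ l → ex k (δ i k ⊓ δ k l) = δ i l)
    (hax : ∀ i k (a : A), i ≠ k → ex i (δ i k ⊓ a) ⊓ ex i (δ i k ⊓ aᶜ) = ⊥)
    (i k l : I) (hki : k ≠ i) (hkl : k ≠ l) :
    {y : PF A | ∃ x ∈ phi (δ i k) ∩ phi (δ k l), ex k '' x.1 = ex k '' y.1}
      = phi (δ i l) := by
  obtain ⟨hjoin, hbot, hidem, hle, hcomp⟩ := hq k
  have hmono : ∀ a b : A, a ≤ b → ex k a ≤ ex k b := fun a b hab => by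
    have h := hjoin a b
    rw [sup_eq_right.mpr hab] at h
    exact h ▸ le_sup_left
  have hmeet : ∀ a b : A, ex k (a ⊓ ex k b) = ex k a ⊓ ex k b := by
    intro a b
    apply le_antisymm
    · exact le_inf (hmono _ _ inf_le_left) ((hmono _ _ inf_le_right).trans (hidem b).le)
    · have hsplit : a = a ⊓ ex k b ⊔ a ⊓ (ex k b)ᶜ := by
        rw [← inf_sup_left, sup_compl_eq_top, inf_top_eq]
      have h1 : ex k a = ex k (a ⊓ ex k b) ⊔ ex k (a ⊓ (ex k b)ᶜ) := by
        conv_lhs => rw [hsplit]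
        exact hjoin _ _
      have h2 : ex k (a ⊓ (ex k b)ᶜ) ≤ (ex k b)ᶜ :=
        (hmono _ _ inf_le_right).trans (hcomp b).le
      calc ex k a ⊓ ex k b ≤ (ex k (a ⊓ ex k b) ⊔ (ex k b)ᶜ) ⊓ ex k b := by
            rw [h1]; exact inf_le_inf_right _ (sup_le_sup_left h2 _)
        _ ≤ ex k (a ⊓ ex k b) := by
            rw [inf_sup_right]
            simp
  have himg : ∀ z : PF A, ex k '' z.1 = {c | c ∈ z.1 ∧ ex k c = c} := by
    intro z
    ext c
    constructor
    · rintro ⟨a, ha, rfl⟩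
      exact ⟨z.2.2.1 a ha _ (hle a), hidem a⟩
    · rintro ⟨hc, hfix⟩
      exact ⟨c, hc, hfix⟩
  ext y
  simp only [Set.mem_setOf_eq, phi, Set.mem_inter_iff]
  constructor
  · rintro ⟨x, ⟨hik, hkl'⟩, himgeq⟩
    have hmemx : δ i k ⊓ δ k l ∈ x.1 := x.2.2.2.1 _ hik _ hkl'
    have hmem : δ i l ∈ ex k '' y.1 := by
      rw [← himgeq]
      exact ⟨_, hmemx, hδ i k l hki hkl⟩
    rw [himg] at hmem
    exact hmem.1
  · intro hy
    set g : A → A := fun a => δ i k ⊓ δ k l ⊓ ex k a with hg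
    have hgmono : ∀ a b : A, a ≤ b → g a ≤ g b := fun a b hab =>
      inf_le_inf_left _ (hmono a b hab)
    have hkey : ∀ a : A, ex k (g a) = δ i l ⊓ ex k a := fun a => by
      rw [hg]; simp only; rw [hmeet, hδ i k l hki hkl]
    have hnbot : ∀ a ∈ y.1, ¬ (g a ≤ ⊥) := by
      intro a ha hle'
      have hb : ex k (g a) = ⊥ := by rw [le_bot_iff.mp hle', hbot]
      rw [hkey] at hb
      have hmem : δ i l ⊓ a ∈ y.1 := y.2.2.2.1 _ hy _ ha
      have hbb : δ i l ⊓ a = ⊥ :=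
        le_bot_iff.mp (hb ▸ inf_le_inf_left _ (hle a))
      exact y.2.2.2.2 (hbb ▸ hmem)
    set xs : Set A := {c | ∃ a ∈ y.1, g a ≤ c} with hxs
    have hxpf : IsPF xs := by
      refine ⟨⟨g (δ i l), δ i l, hy, le_rfl⟩, ?_, ?_, ?_⟩
      · rintro c ⟨a, ha, hac⟩ b hcb; exact ⟨a, ha, hac.trans hcb⟩
      · rintro c ⟨a, ha, hac⟩ d ⟨b, hb, hbd⟩
        refine ⟨a ⊓ b, y.2.2.2.1 _ ha _ hb, ?_⟩
        exact le_inf ((hgmono _ _ inf_le_left).trans hac)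
          ((hgmono _ _ inf_le_right).trans hbd)
      · rintro ⟨a, ha, hle'⟩
        exact hnbot a ha hle'
    refine ⟨⟨xs, hxpf⟩, ⟨⟨δ i l, hy, inf_le_left.trans inf_le_left⟩,
      ⟨δ i l, hy, inf_le_left.trans inf_le_right⟩⟩, ?_⟩
    rw [himg, himg]
    ext c
    simp only [Set.mem_setOf_eq]
    constructor
    · rintro ⟨⟨a, ha, hac⟩, hfix⟩
      refine ⟨?_, hfix⟩
      have h1 : δ i l ⊓ ex k a ≤ c := by
        rw [← hkey, ← hfix]
        exact hmono _ _ hac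
      have h2 : δ i l ⊓ a ∈ y.1 := y.2.2.2.1 _ hy _ ha
      exact y.2.2.1 _ h2 _ ((inf_le_inf_left _ (hle a)).trans h1)
    · rintro ⟨hc, hfix⟩
      exact ⟨⟨c, hc, inf_le_right.trans hfix.le⟩, hfix⟩
end

section
/- Let A be a Boolean algebra, E a quantifier on A, and d ∈ A an element such that E(d ⊓ a) ⊓ E(d ⊓ aᶜ) = ⊥ for every a ∈ A. Define the relation S on F(A) by x S y iff {E c : c ∈ x} = {E c : c ∈ y}, with S[W] = {y ∈ F(A) : x S y for some x ∈ W}. Then for every a ∈ A, S[φ(d) ∩ φ(a)] ∩ S[φ(d) ∩ φ(aᶜ)] = ∅. -/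
theorem stmt16 {A : Type*} [BooleanAlgebra A] (E : A → A) (hE : IsQuantifierB E)
    (d : A) (hd : ∀ a : A, E (d ⊓ a) ⊓ E (d ⊓ aᶜ) = ⊥) (a : A) :
    {y : PF A | ∃ x ∈ phi d ∩ phi a, E '' x.1 = E '' y.1} ∩
      {y : PF A | ∃ x ∈ phi d ∩ phi aᶜ, E '' x.1 = E '' y.1} = ∅ := by
  obtain ⟨-, -, -, hle, -⟩ := hE
  ext y
  simp only [Set.mem_inter_iff, Set.mem_setOf_eq, Set.mem_empty_iff_false, iff_false, not_and]
  rintro ⟨x₁, ⟨hd1, ha1⟩, h1⟩ ⟨x₂, ⟨hd2, ha2⟩, h2⟩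
  obtain ⟨-, yup, ymeet, ybot⟩ := y.2
  have key : ∀ (x : PF A) (b : A), b ∈ x.1 → E '' x.1 = E '' y.1 → E b ∈ y.1 := by
    intro x b hb h
    have : E b ∈ E '' y.1 := h ▸ ⟨b, hb, rfl⟩
    obtain ⟨c, hc, hcE⟩ := this
    exact yup c hc _ (hcE ▸ hle c)
  have m1 := (x₁.2.2.2.1) d hd1 a ha1
  have m2 := (x₂.2.2.2.1) d hd2 aᶜ ha2
  have e1 := key x₁ _ m1 h1
  have e2 := key x₂ _ m2 h2
  exact ybot (hd a ▸ ymeet _ e1 _ e2)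
end

section
/- Let A be a Boolean algebra and E a quantifier on A. Define the relation S on F(A) by x S y iff {E c : c ∈ x} = {E c : c ∈ y}, with S[W] = {y ∈ F(A) : x S y for some x ∈ W}. Then for every a ∈ A, S[φ(a)] = φ(E a). -/
theorem stmt17 {A : Type*} [BooleanAlgebra A] (E : A → A) (hE : IsQuantifierB E)
    (a : A) :
    {y : PF A | ∃ x : PF A, a ∈ x.1 ∧ E '' x.1 = E '' y.1} = phi (E a) := by

  obtain ⟨hsup, hbot, hidem, hle, hcomp⟩ := hE
  have hmono : ∀ p q : A, p ≤ q → E p ≤ E q := fun p q h => by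
    calc E p ≤ E p ⊔ E q := le_sup_left
    _ = E (p ⊔ q) := (hsup p q).symm
    _ = E q := by rw [sup_eq_right.mpr h]
  have hkey : ∀ p q : A, E p ⊓ E q ≤ E (p ⊓ E q) := fun p q => by
    have h1 : E p = E (p ⊓ E q) ⊔ E (p ⊓ (E q)ᶜ) := by
      rw [← hsup, sup_inf_inf_compl]
    have h2 : E (p ⊓ (E q)ᶜ) ≤ (E q)ᶜ := by
      calc E (p ⊓ (E q)ᶜ) ≤ E ((E q)ᶜ) := hmono _ _ inf_le_right
      _ = (E q)ᶜ := hcomp q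
    calc E p ⊓ E q = (E (p ⊓ E q) ⊔ E (p ⊓ (E q)ᶜ)) ⊓ E q := by rw [← h1]
    _ ≤ (E (p ⊓ E q) ⊔ (E q)ᶜ) ⊓ E q := inf_le_inf_right _ (sup_le_sup_left h2 _)
    _ = E (p ⊓ E q) ⊓ E q ⊔ (E q)ᶜ ⊓ E q := inf_sup_right _ _ _
    _ ≤ E (p ⊓ E q) := by simp
  ext y
  simp only [Set.mem_setOf_eq, phi]
  constructor
  · rintro ⟨x, hax, hEx⟩
    have h1 : E a ∈ E '' x.1 := ⟨a, hax, rfl⟩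
    rw [hEx] at h1
    obtain ⟨c, hc, hEc⟩ := h1
    exact y.2.2.1 c hc (E a) (hEc ▸ hle c)
  · intro hy
    obtain ⟨c₀, hc₀⟩ := y.2.1
    have hEy : ∀ c ∈ y.1, E c ∈ y.1 := fun c hc => y.2.2.1 c hc (E c) (hle c)
    refine ⟨⟨{b | ∃ c ∈ y.1, a ⊓ E c ≤ b}, ?_, ?_, ?_, ?_⟩, ⟨c₀, hc₀, inf_le_left⟩, ?_⟩
    · exact ⟨a, c₀, hc₀, inf_le_left⟩
    · rintro b ⟨c, hc, hcb⟩ b' hbb'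
      exact ⟨c, hc, hcb.trans hbb'⟩
    · rintro b₁ ⟨c₁, hc₁, h₁⟩ b₂ ⟨c₂, hc₂, h₂⟩
      refine ⟨c₁ ⊓ c₂, y.2.2.2.1 c₁ hc₁ c₂ hc₂, le_inf ?_ ?_⟩
      · exact (inf_le_inf_left a (hmono _ _ inf_le_left)).trans h₁
      · exact (inf_le_inf_left a (hmono _ _ inf_le_right)).trans h₂
    · rintro ⟨c, hc, hbot'⟩
      have ha : a ≤ (E c)ᶜ := le_compl_iff_disjoint_right.mpr (disjoint_iff_inf_le.mpr hbot')
      have hEa : E a ≤ (E c)ᶜ := (hcomp c) ▸ hmono _ _ ha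
      have : (⊥ : A) ∈ y.1 := by
        refine y.2.2.1 _ (y.2.2.2.1 _ hy _ (hEy c hc)) ⊥ ?_
        calc E a ⊓ E c ≤ (E c)ᶜ ⊓ E c := inf_le_inf_right _ hEa
        _ = ⊥ := compl_inf_eq_bot
      exact y.2.2.2.2 this
    · ext b'
      constructor
      · rintro ⟨b, ⟨c, hc, hcb⟩, rfl⟩
        have hEb : E b ∈ y.1 :=
          y.2.2.1 _ (y.2.2.2.1 _ hy _ (hEy c hc)) _ ((hkey a c).trans (hmono _ _ hcb))
        exact ⟨E b, hEb, hidem b⟩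
      · rintro ⟨c, hc, rfl⟩
        exact ⟨E c, ⟨c, hc, inf_le_right⟩, hidem c⟩
end

section
/- Let A be a Boolean algebra. Order F(A) by set inclusion, define x ⊥ y iff there exists a ∈ x with aᶜ ∈ y, and for U ⊆ F(A) set U^⊥ = {x ∈ F(A) : x ⊥ y for all y ∈ U} and U* = {x ∈ F(A) : z ∉ U for every proper filter z with x ⊆ z}. Then: (i) for every upward-closed U ⊆ F(A) (i.e., x ∈ U and x ⊆ z imply z ∈ U), U^⊥ = U*; and (ii) a subset U ⊆ F(A) satisfies U = U^⊥⊥ if and only if U is upward closed and U = U**. In particular, the biorthogonally closed subsets of F(A) coincide with the regular open subsets of F(A) in the upset topology of the inclusion order. -/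
/-- Orthogonal of a set of proper filters of a Boolean algebra. -/
def bPerp {A : Type*} [BooleanAlgebra A] (U : Set (PF A)) : Set (PF A) :=
  {x | ∀ y ∈ U, ∃ a ∈ x.1, aᶜ ∈ y.1}

/-- The `*` operation in the upset topology of the inclusion order on proper filters. -/
def bStar {A : Type*} [BooleanAlgebra A] (U : Set (PF A)) : Set (PF A) :=
  {x | ∀ z : PF A, x.1 ⊆ z.1 → z ∉ U}

/-- Compatible filters have a common proper extension. -/
lemma compat_ext {A : Type*} [BooleanAlgebra A] (x y : PF A)
    (h : ∀ a ∈ x.1, aᶜ ∉ y.1) : ∃ z : PF A, x.1 ⊆ z.1 ∧ y.1 ⊆ z.1 := by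
  obtain ⟨⟨xa, hxa⟩, hxup, hxmeet, hxbot⟩ := x.2
  obtain ⟨⟨yb, hyb⟩, hyup, hymeet, hybot⟩ := y.2
  set S : Set A := {c | ∃ a ∈ x.1, ∃ b ∈ y.1, a ⊓ b ≤ c} with hS
  have hSPF : IsPF S := by
    refine ⟨⟨xa ⊓ yb, xa, hxa, yb, hyb, le_rfl⟩, ?_, ?_, ?_⟩
    · rintro c ⟨a, ha, b, hb, hle⟩ d hcd
      exact ⟨a, ha, b, hb, hle.trans hcd⟩
    · rintro c ⟨a, ha, b, hb, hle⟩ c' ⟨a', ha', b', hb', hle'⟩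
      refine ⟨a ⊓ a', hxmeet a ha a' ha', b ⊓ b', hymeet b hb b' hb', ?_⟩
      calc (a ⊓ a') ⊓ (b ⊓ b') = (a ⊓ b) ⊓ (a' ⊓ b') := by ac_rfl
        _ ≤ c ⊓ c' := inf_le_inf hle hle'
    · rintro ⟨a, ha, b, hb, hle⟩
      have hab : a ⊓ b = ⊥ := le_bot_iff.mp hle
      have : b ≤ aᶜ := le_compl_iff_disjoint_left.mpr (disjoint_iff.mpr hab)
      exact h a ha (hyup b hb aᶜ this)
  refine ⟨⟨S, hSPF⟩, ?_, ?_⟩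
  · intro a ha; exact ⟨a, ha, yb, hyb, inf_le_left⟩
  · intro b hb; exact ⟨xa, hxa, b, hb, inf_le_right⟩

lemma perp_eq_star {A : Type*} [BooleanAlgebra A] (U : Set (PF A))
    (hU : ∀ x ∈ U, ∀ z : PF A, x.1 ⊆ z.1 → z ∈ U) : bPerp U = bStar U := by
  ext x
  constructor
  · intro hx z hxz hzU
    obtain ⟨a, ha, hac⟩ := hx z hzU
    have hza : a ∈ z.1 := hxz ha
    have : (⊥ : A) ∈ z.1 := by
      have := z.2.2.2.1 a hza aᶜ hac
      rwa [inf_compl_eq_bot] at this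
    exact z.2.2.2.2 this
  · intro hx y hyU
    by_contra hc
    push_neg at hc
    have : ∀ a ∈ x.1, aᶜ ∉ y.1 := fun a ha => hc a ha
    obtain ⟨z, hxz, hyz⟩ := compat_ext x y this
    exact hx z hxz (hU y hyU z hyz)

lemma perp_up {A : Type*} [BooleanAlgebra A] (U : Set (PF A)) :
    ∀ x ∈ bPerp U, ∀ z : PF A, x.1 ⊆ z.1 → z ∈ bPerp U := by
  intro x hx z hxz y hyU
  obtain ⟨a, ha, hac⟩ := hx y hyU
  exact ⟨a, hxz ha, hac⟩

lemma star_up {A : Type*} [BooleanAlgebra A] (U : Set (PF A)) :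
    ∀ x ∈ bStar U, ∀ z : PF A, x.1 ⊆ z.1 → z ∈ bStar U := by
  intro x hx z hxz w hzw
  exact hx w (hxz.trans hzw)

theorem stmt19 {A : Type*} [BooleanAlgebra A] :
    (∀ U : Set (PF A), (∀ x ∈ U, ∀ z : PF A, x.1 ⊆ z.1 → z ∈ U) → bPerp U = bStar U) ∧
    (∀ U : Set (PF A), U = bPerp (bPerp U) ↔
      ((∀ x ∈ U, ∀ z : PF A, x.1 ⊆ z.1 → z ∈ U) ∧ U = bStar (bStar U))) := by
  refine ⟨perp_eq_star, fun U => ⟨?_, ?_⟩⟩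
  · intro hU
    have hup : ∀ x ∈ U, ∀ z : PF A, x.1 ⊆ z.1 → z ∈ U := by
      rw [hU]; exact perp_up _
    refine ⟨hup, ?_⟩
    have h1 : bPerp U = bStar U := perp_eq_star U hup
    have h2 : bPerp (bPerp U) = bStar (bPerp U) := perp_eq_star _ (perp_up U)
    conv_lhs => rw [hU, h2, h1]
  · rintro ⟨hup, hU⟩
    have h1 : bPerp U = bStar U := perp_eq_star U hup
    have h2 : bPerp (bStar U) = bStar (bStar U) := perp_eq_star _ (star_up U)
    rw [h1, h2]; exact hU
end
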